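/- For every nonzero integer m, the matrix T^m, where T = [[1,1],[0,1]], is not a commutator in SL(2,ℤ): there are no X, Y in SL(2,ℤ) with T^m = X⁻¹·Y·X·Y⁻¹. -/

import Mathlib

open Matrix

noncomputable def T3 : Matrix.SpecialLinearGroup (Fin 2) ℤ :=
  ⟨!![1, 1; 0, 1], by norm_num [Matrix.det_fin_two_of]⟩

lemma T3_eq : T3 = ModularGroup.T := rfl

lemma key3 (a b c d p q r s m : ℤ) (hm : m ≠ 0)
    (hA : a * d - b * c = 1) (hB : p * s - q * r = 1)
    (e00 : p * a * s + q * c * s - (p * b + q * d) * r = a)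
    (e01 : -(p * a * q) - q * c * q + (p * b + q * d) * p = a * m + b)
    (e10 : r * a * s + s * c * s - (r * b + s * d) * r = c)
    (e11 : -(r * a * q) - s * c * q + (r * b + s * d) * p = c * m + d) : False := by
  have hc : c = 0 := by
    have hcm : c * m = 0 := by linear_combination (a + d) * hB - e00 - e11
    rcases mul_eq_zero.1 hcm with h | h
    · exact h
    · exact absurd h hm
  subst hc
  have had : a * d = 1 := by linarith
  have haa : a = d := by
    rcases Int.mul_eq_one_iff_eq_one_or_neg_one.1 had with ⟨h1, h2⟩ | ⟨h1, h2⟩ <;> omega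
  subst haa
  have ha2 : a * a = 1 := had
  have hrb : r * r * b = 0 := by linear_combination -e10
  have he01 : a * m + b = p * p * b := by linear_combination -e01
  have ham : a * m = 0 := by
    rcases mul_eq_zero.1 hrb with h | hb
    · have hr : r = 0 := by rcases mul_eq_zero.1 h with hr | hr <;> exact hr
      subst hr
      have hps : p * s = 1 := by linarith
      have hp2 : p * p = 1 := by
        rcases Int.mul_eq_one_iff_eq_one_or_neg_one.1 hps with ⟨h1, _⟩ | ⟨h1, _⟩ <;>
          simp [h1]
      linear_combination he01 + b * hp2
    · subst hb
      linear_combination he01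
  rcases mul_eq_zero.1 ham with h | h
  · subst h; simp at ha2
  · exact hm h

/-- For every nonzero integer `m`, `T^m` is not a commutator in `SL(2,ℤ)`. -/
theorem stmt_3 (m : ℤ) (hm : m ≠ 0) :
    ¬ ∃ X Y : Matrix.SpecialLinearGroup (Fin 2) ℤ,
        T3 ^ m = X⁻¹ * Y * X * Y⁻¹ := by
  rintro ⟨X, Y, h⟩
  have h' : Y * X * Y⁻¹ = X * T3 ^ m := by rw [h]; group
  rw [Matrix.SpecialLinearGroup.SL2_inv_expl Y] at h'
  have h2 := congrArg (fun g : Matrix.SpecialLinearGroup (Fin 2) ℤ =>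
    (g : Matrix (Fin 2) (Fin 2) ℤ)) h'
  change (Y : Matrix (Fin 2) (Fin 2) ℤ) * X * !![Y.1 1 1, -Y.1 0 1; -Y.1 1 0, Y.1 0 0] = _ at h2
  simp only [Matrix.SpecialLinearGroup.coe_mul, T3_eq, ModularGroup.coe_T_zpow] at h2
  have hA := X.2
  have hB := Y.2
  rw [Matrix.det_fin_two] at hA hB
  set a := X.1 0 0; set b := X.1 0 1; set c := X.1 1 0; set d := X.1 1 1
  set p := Y.1 0 0; set q := Y.1 0 1; set r := Y.1 1 0; set s := Y.1 1 1
  have e00 := congrFun (congrFun h2 0) 0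
  have e01 := congrFun (congrFun h2 0) 1
  have e10 := congrFun (congrFun h2 1) 0
  have e11 := congrFun (congrFun h2 1) 1
  simp [Matrix.mul_apply, Fin.sum_univ_two] at e00 e01 e10 e11
  exact key3 a b c d p q r s m hm (by linarith) (by linarith)
    (by linarith) (by linarith) (by linarith) (by linarith)
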